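/- For every integer m ≥ 3, the total domination number of the graph G_{4m+2} equals 3, i.e., γ_t(G_{4m+2}) = 3. -/

import Mathlib

open SimpleGraph

/-- `S` is a total dominating set of `G`: every vertex of `G` has a neighbor in `S`. -/
def IsTDS {V : Type*} (G : SimpleGraph V) (S : Set V) : Prop :=
  ∀ v : V, ∃ u ∈ S, G.Adj v u

/-- The total domination number `γₜ(G)`: the minimum cardinality of a total dominating set. -/
noncomputable def gammaT {V : Type*} (G : SimpleGraph V) : ℕ :=
  sInf {n : ℕ | ∃ S : Set V, IsTDS G S ∧ S.ncard = n}

/-- The degree of a vertex. -/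
noncomputable def deg {V : Type*} (G : SimpleGraph V) (v : V) : ℕ :=
  (G.neighborSet v).ncard

/-- The maximum degree `Δ(G)`. -/
noncomputable def maxDeg {V : Type*} [Fintype V] (G : SimpleGraph V) : ℕ :=
  Finset.univ.sup fun v => deg G v

/-- The vertex-deleted graph `G − v`. -/
def delVert {V : Type*} (G : SimpleGraph V) (v : V) : SimpleGraph {u : V // u ≠ v} :=
  G.induce {u : V | u ≠ v}

/-- `G` is 3-γₜ-critical: `γₜ(G) = 3` and for every vertex `v` that is not adjacent to a
vertex of degree one, `γₜ(G − v) = 2`. -/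
def IsThreeGammaTCritical {V : Type*} (G : SimpleGraph V) : Prop :=
  gammaT G = 3 ∧
    ∀ v : V, (¬ ∃ u : V, G.Adj v u ∧ deg G u = 1) → gammaT (delVert G v) = 2

/-- Vertices of `G_{4m+2}`: `x, y, z`, `y₁,…,y_{2m−1}` and `z₁,…,z_{2m}`;
`Y i` stands for `y_{i+1}` and `Z i` for `z_{i+1}` (0-based `Fin` indices). -/
inductive V42 (m : ℕ) : Type
  | x : V42 m
  | y : V42 m
  | z : V42 m
  | Y : Fin (2 * m - 1) → V42 m
  | Z : Fin (2 * m) → V42 m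
  deriving DecidableEq, Fintype

/-- Base edge relation of `G_{4m+2}` (the paper's 1-based indices are shifted down by 1):
`x yᵢ`, `x zᵢ`, `y yᵢ`, `y z`, `z zᵢ`, `yᵢ y_{1+((i+m−2) mod (2m−1))}`,
`zᵢ zⱼ` for `i < j`, `j ≠ i + m`, and `yᵢ zⱼ` for `j ≠ i`, `j ≠ i + 1`. -/
def R42 (m : ℕ) : V42 m → V42 m → Prop
  | .x, .Y _ => True
  | .x, .Z _ => True
  | .y, .Y _ => True
  | .y, .z => True
  | .z, .Z _ => True
  | .Y i, .Y j => j.val = (i.val + m - 1) % (2 * m - 1)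
  | .Z i, .Z j => i.val < j.val ∧ j.val ≠ i.val + m
  | .Y i, .Z j => j.val ≠ i.val ∧ j.val ≠ i.val + 1
  | _, _ => False

/-- The graph `G_{4m+2}`. -/
def G42 (m : ℕ) : SimpleGraph (V42 m) := SimpleGraph.fromRel (R42 m)


lemma modf (m x : ℕ) (hm : 3 ≤ m) (hx : x < 2*(2*m-1)) :
    (x % (2*m-1) = x ∧ x < 2*m-1) ∨ (x % (2*m-1) = x - (2*m-1) ∧ 2*m-1 ≤ x) := by
  rcases Nat.lt_or_ge x (2*m-1) with h|h
  · exact Or.inl ⟨Nat.mod_eq_of_lt h, h⟩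
  · refine Or.inr ⟨?_, h⟩
    rw [Nat.mod_eq_sub_mod h, Nat.mod_eq_of_lt (by omega)]

lemma not_adj_YY (m : ℕ) (hm : 3 ≤ m) (i k : Fin (2*m-1))
    (h1 : ¬ (k.val = (i.val + m - 1) % (2*m-1)))
    (h2 : ¬ (k.val = (i.val + m) % (2*m-1))) :
    ¬ (G42 m).Adj (.Y k) (.Y i) := by
  have h2' : ¬ (i.val = (k.val + m - 1) % (2*m-1)) := by
    have hI := i.isLt
    have hK := k.isLt
    have hf1 := modf m (k.val+m-1) hm (by omega)
    have hf2 := modf m (i.val+m) hm (by omega)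
    omega
  simp [G42, R42]
  exact fun _ => ⟨h2', h1⟩

lemma not_adj_YZ (m : ℕ) (hm : 3 ≤ m) (i : Fin (2*m-1)) (j : Fin (2*m))
    (h : j.val = i.val ∨ j.val = i.val + 1) : ¬ (G42 m).Adj (.Y i) (.Z j) := by
  simp [G42, R42]; omega

lemma not_adj_ZY (m : ℕ) (hm : 3 ≤ m) (i : Fin (2*m-1)) (j : Fin (2*m))
    (h : j.val = i.val ∨ j.val = i.val + 1) : ¬ (G42 m).Adj (.Z j) (.Y i) :=
  fun ha => not_adj_YZ m hm i j h ha.symm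

lemma not_adj_ZZ (m : ℕ) (hm : 3 ≤ m) (i j : Fin (2*m))
    (h : i.val = j.val ∨ i.val = j.val + m ∨ j.val = i.val + m) :
    ¬ (G42 m).Adj (.Z i) (.Z j) := by
  simp [G42, R42]; omega

/-- Key: no two adjacent vertices totally dominate `G42 m`. -/
lemma key (m : ℕ) (hm : 3 ≤ m) (u v : V42 m) (h : (G42 m).Adj u v) :
    ∃ w, ¬ (G42 m).Adj w u ∧ ¬ (G42 m).Adj w v := by
  have hYZ : ∀ (i : Fin (2*m-1)) (j : Fin (2*m)),
      (j.val ≠ i.val ∧ j.val ≠ i.val + 1) →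
      ∃ w, ¬ (G42 m).Adj w (.Y i) ∧ ¬ (G42 m).Adj w (.Z j) := by
    intro i j hij
    have hI : i.val < 2*m-1 := i.isLt
    have hJ : j.val < 2*m := j.isLt
    have hA := modf m (i.val+m-1) hm (by omega)
    have hB := modf m (i.val+m) hm (by omega)
    by_cases hB0 : j.val = (i.val+m) % (2*m-1)
    · -- case B: use a Z witness
      rcases hB with ⟨hb, hb'⟩ | ⟨hb, hb'⟩
      · -- J = I + m, use Z_I
        exact ⟨.Z ⟨i.val, by omega⟩,
          not_adj_ZY m hm i ⟨i.val, by omega⟩ (Or.inl rfl),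
          not_adj_ZZ m hm ⟨i.val, by omega⟩ j (by right; right; show j.val = i.val + m; omega)⟩
      · -- J = I + m - (2m-1), use Z_{I+1}
        exact ⟨.Z ⟨i.val+1, by omega⟩,
          not_adj_ZY m hm i ⟨i.val+1, by omega⟩ (Or.inr rfl),
          not_adj_ZZ m hm ⟨i.val+1, by omega⟩ j (by right; left; show i.val+1 = j.val + m; omega)⟩
    · -- case A
      by_cases hA1 : j.val < 2*m-1 ∧ j.val ≠ (i.val+m-1) % (2*m-1)
      · exact ⟨.Y ⟨j.val, hA1.1⟩,
          not_adj_YY m hm i ⟨j.val, hA1.1⟩ hA1.2 hB0,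
          not_adj_YZ m hm ⟨j.val, hA1.1⟩ j (Or.inl rfl)⟩
      · push_neg at hA1
        by_cases hJn : j.val < 2*m-1
        · have hJA : j.val = (i.val+m-1) % (2*m-1) := hA1 hJn
          by_cases hJ0 : j.val = 0
          · -- I = m, use Z_m
            have hIm : i.val = m := by omega
            exact ⟨.Z ⟨m, by omega⟩,
              not_adj_ZY m hm i ⟨m, by omega⟩ (Or.inl (by show m = i.val; omega)),
              not_adj_ZZ m hm ⟨m, by omega⟩ j (by right; left; show m = j.val + m; omega)⟩
          · -- use Y_{J-1}
            exact ⟨.Y ⟨j.val-1, by omega⟩,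
              not_adj_YY m hm i ⟨j.val-1, by omega⟩
                (by show ¬(j.val-1 = (i.val+m-1) % (2*m-1)); omega)
                (by show ¬(j.val-1 = (i.val+m) % (2*m-1)); omega),
              not_adj_YZ m hm ⟨j.val-1, by omega⟩ j (Or.inr (by show j.val = j.val-1+1; omega))⟩
        · -- J = 2m-1
          have hJtop : j.val = 2*m-1 := by omega
          by_cases hE : (2*m-2 = (i.val+m-1) % (2*m-1)) ∨ (2*m-2 = (i.val+m) % (2*m-1))
          · -- I ∈ {m-1, m-2}, use Z_{m-1}
            have hIr : i.val = m-1 ∨ i.val = m-2 := by omega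
            exact ⟨.Z ⟨m-1, by omega⟩,
              not_adj_ZY m hm i ⟨m-1, by omega⟩ (by show m-1 = i.val ∨ m-1 = i.val+1; omega),
              not_adj_ZZ m hm ⟨m-1, by omega⟩ j (by right; right; show j.val = m-1+m; omega)⟩
          · push_neg at hE
            exact ⟨.Y ⟨2*m-2, by omega⟩,
              not_adj_YY m hm i ⟨2*m-2, by omega⟩
                (by show ¬(2*m-2 = (i.val+m-1) % (2*m-1)); omega)
                (by show ¬(2*m-2 = (i.val+m) % (2*m-1)); omega),
              not_adj_YZ m hm ⟨2*m-2, by omega⟩ j (Or.inr (by show j.val = 2*m-2+1; omega))⟩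
  have hsymm := h.symm
  cases u <;> cases v <;> first
    | (simp [G42, R42] at h; done)
    | skip
  case x.Y i => exact ⟨.z, by simp [G42, R42], by simp [G42, R42]⟩
  case Y.x i => exact ⟨.z, by simp [G42, R42], by simp [G42, R42]⟩
  case x.Z j => exact ⟨.y, by simp [G42, R42], by simp [G42, R42]⟩
  case Z.x j => exact ⟨.y, by simp [G42, R42], by simp [G42, R42]⟩
  case y.z => exact ⟨.x, by simp [G42, R42], by simp [G42, R42]⟩
  case z.y => exact ⟨.x, by simp [G42, R42], by simp [G42, R42]⟩
  case y.Y i => exact ⟨.Z ⟨i.val, by omega⟩, by simp [G42, R42],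
      not_adj_ZY m hm i ⟨i.val, by omega⟩ (Or.inl rfl)⟩
  case Y.y i => exact ⟨.Z ⟨i.val, by omega⟩,
      not_adj_ZY m hm i ⟨i.val, by omega⟩ (Or.inl rfl), by simp [G42, R42]⟩
  case z.Z j =>
    by_cases hj : j.val < 2*m-1
    · exact ⟨.Y ⟨j.val, hj⟩, by simp [G42, R42],
        not_adj_YZ m hm ⟨j.val, hj⟩ j (Or.inl rfl)⟩
    · exact ⟨.Y ⟨2*m-2, by omega⟩, by simp [G42, R42],
        not_adj_YZ m hm ⟨2*m-2, by omega⟩ j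
          (Or.inr (by show j.val = 2*m-2+1; have := j.isLt; omega))⟩
  case Z.z j =>
    by_cases hj : j.val < 2*m-1
    · exact ⟨.Y ⟨j.val, hj⟩, not_adj_YZ m hm ⟨j.val, hj⟩ j (Or.inl rfl),
        by simp [G42, R42]⟩
    · exact ⟨.Y ⟨2*m-2, by omega⟩,
        not_adj_YZ m hm ⟨2*m-2, by omega⟩ j
          (Or.inr (by show j.val = 2*m-2+1; have := j.isLt; omega)),
        by simp [G42, R42]⟩
  case Y.Y i k => exact ⟨.z, by simp [G42, R42], by simp [G42, R42]⟩
  case Z.Z i k => exact ⟨.y, by simp [G42, R42], by simp [G42, R42]⟩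
  case Y.Z i j =>
    have hij : j.val ≠ i.val ∧ j.val ≠ i.val + 1 := by
      have h' := h; simp [G42, R42] at h'; tauto
    exact hYZ i j hij
  case Z.Y j i =>
    have hij : j.val ≠ i.val ∧ j.val ≠ i.val + 1 := by
      have h' := hsymm; simp [G42, R42] at h'; tauto
    obtain ⟨w, hw1, hw2⟩ := hYZ i j hij
    exact ⟨w, hw2, hw1⟩

/-- Lemma 2.3: `γₜ(G_{4m+2}) = 3` for every `m ≥ 3`. -/
theorem gammaT_G42 (m : ℕ) (hm : 3 ≤ m) : gammaT (G42 m) = 3 := by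
  have h0 : 0 < 2*m-1 := by omega
  -- the total dominating set {x, y, y₁}
  have hTDS : IsTDS (G42 m) {V42.x, V42.y, V42.Y ⟨0, h0⟩} := by
    intro v
    cases v with
    | x => exact ⟨.Y ⟨0, h0⟩, by simp, by simp [G42, R42]⟩
    | y => exact ⟨.Y ⟨0, h0⟩, by simp, by simp [G42, R42]⟩
    | z => exact ⟨.y, by simp, by simp [G42, R42]⟩
    | Y i => exact ⟨.x, by simp, by simp [G42, R42]⟩
    | Z j => exact ⟨.x, by simp, by simp [G42, R42]⟩
  have hcard : ({V42.x, V42.y, V42.Y ⟨0, h0⟩} : Set (V42 m)).ncard = 3 := by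
    rw [Set.ncard_insert_of_notMem (by simp), Set.ncard_insert_of_notMem (by simp),
      Set.ncard_singleton]
  have hmem : 3 ∈ {n : ℕ | ∃ S : Set (V42 m), IsTDS (G42 m) S ∧ S.ncard = n} :=
    ⟨_, hTDS, hcard⟩
  refine le_antisymm (Nat.sInf_le hmem) (le_csInf ⟨3, hmem⟩ ?_)
  rintro n ⟨S, hS, rfl⟩
  by_contra hlt
  push_neg at hlt
  have hfin : S.Finite := Set.toFinite S
  obtain ⟨u1, hu1, -⟩ := hS V42.x
  have hpos : 0 < S.ncard := (Set.ncard_pos hfin).mpr ⟨u1, hu1⟩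
  have hcases : S.ncard = 1 ∨ S.ncard = 2 := by omega
  rcases hcases with h | h
  · -- |S| = 1
    obtain ⟨a, rfl⟩ := Set.ncard_eq_one.mp h
    obtain ⟨b, hb, hadj⟩ := hS a
    rw [Set.mem_singleton_iff] at hb
    subst hb
    exact (G42 m).loopless.irrefl _ hadj
  · -- |S| = 2
    obtain ⟨a, b, hab, rfl⟩ := Set.ncard_eq_two.mp h
    have hadj : (G42 m).Adj a b := by
      obtain ⟨c, hc, hadj⟩ := hS a
      rcases hc with rfl | rfl
      · exact absurd hadj ((G42 m).loopless.irrefl _)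
      · exact hadj
    obtain ⟨w, hw1, hw2⟩ := key m hm a b hadj
    obtain ⟨c, hc, hadjc⟩ := hS w
    rcases hc with rfl | rfl
    · exact hw1 hadjc
    · exact hw2 hadjc
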